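/- The explicit expression h_n(a,b,c,d) = (1/(abcd;t)_n) · Σ_{0 ≤ i,j,k, i+j+k ≤ n} [n choose i,j,k]_t · t^{C(i,2)+C(j,2)} · a^i b^j (-c)^{n-k} (-d)^{i+j+k} satisfies the three-term recursion (t^{n-1}ab - c^{-1}d^{-1}) h_n + (t^{n-1}(a+b) - (c^{-1}+d^{-1})) h_{n-1} + (t^{n-1} - 1) h_{n-2} = 0 with initial condition h_0 = 1. -/

import Mathlib

open Finset

noncomputable section

/-- The t-Pochhammer symbol `(x;t)_n = ∏_{i=0}^{n-1} (1 - x t^i)`. -/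
def tpoch {F : Type*} [Field F] (t x : F) (n : ℕ) : F :=
  ∏ i ∈ Finset.range n, (1 - x * t ^ i)

/-- The explicit expression
`h_n(a,b,c,d) = (abcd;t)_n⁻¹ Σ_{0≤i,j,k, i+j+k≤n} [n choose i,j,k]_t
  t^(C(i,2)+C(j,2)) a^i b^j (-c)^(n-k) (-d)^(i+j+k)`,
with `[n choose i,j,k]_t = (t;t)_n / ((t;t)_i (t;t)_j (t;t)_k (t;t)_{n-i-j-k})`. -/
def hExp {F : Type*} [Field F] (t a b c d : F) (n : ℕ) : F :=
  (tpoch t (a * b * c * d) n)⁻¹ *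
    ∑ i ∈ Finset.range (n + 1), ∑ j ∈ Finset.range (n + 1), ∑ k ∈ Finset.range (n + 1),
      if i + j + k ≤ n then
        (tpoch t t n / (tpoch t t i * tpoch t t j * tpoch t t k * tpoch t t (n - i - j - k)))
          * t ^ (Nat.choose i 2 + Nat.choose j 2)
          * a ^ i * b ^ j * (-c) ^ (n - k) * (-d) ^ (i + j + k)
      else 0

namespace Stmt2

variable {F : Type*} [Field F]

/-- guarded q-binomial -/
def Bq (t : F) (n i : ℕ) : F :=
  if i ≤ n then tpoch t t n / (tpoch t t i * tpoch t t (n - i)) else 0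

lemma tpoch_zero (t x : F) : tpoch t x 0 = 1 := by simp [tpoch]

lemma tpoch_succ (t x : F) (n : ℕ) :
    tpoch t x (n + 1) = tpoch t x n * (1 - x * t ^ n) := Finset.prod_range_succ _ _

lemma tpoch_t_succ (t : F) (n : ℕ) :
    tpoch t t (n + 1) = tpoch t t n * (1 - t ^ (n + 1)) := by
  rw [tpoch_succ, ← pow_succ']

section
variable {t : F} (htt : ∀ m : ℕ, tpoch t t m ≠ 0)
include htt

lemma hpow (k : ℕ) : (1 : F) - t ^ (k + 1) ≠ 0 := by
  intro h
  have := htt (k + 1)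
  rw [tpoch_t_succ, h, mul_zero] at this
  exact this rfl

lemma Bq_zero_right (n : ℕ) : Bq t n 0 = 1 := by
  rw [Bq, if_pos (Nat.zero_le n)]
  simp [tpoch_zero, div_self (htt n)]

lemma Bq_self (n : ℕ) : Bq t n n = 1 := by
  rw [Bq, if_pos le_rfl]
  simp [tpoch_zero, div_self (htt n)]

omit htt in
lemma Bq_of_gt {n i : ℕ} (h : n < i) : Bq t n i = 0 := by
  rw [Bq, if_neg (by omega)]

lemma abs2 (m k : ℕ) :
    (1 - t ^ (k + 1)) * Bq t (m + 1) (k + 1) = (1 - t ^ (m + 1)) * Bq t m k := by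
  rcases le_or_gt k m with h | h
  · rw [Bq, if_pos (by omega), Bq, if_pos h, Nat.succ_sub_succ]
    rw [tpoch_t_succ t m, tpoch_t_succ t k]
    have h1 := htt k; have h2 := htt (m - k); have h3 := hpow htt k; have h4 := hpow htt m
    set Pm := tpoch t t m
    set Pk := tpoch t t k
    set Pmk := tpoch t t (m - k)
    field_simp
  · rw [Bq_of_gt (by omega), Bq_of_gt h, mul_zero, mul_zero]

lemma abs1 (m i : ℕ) :
    (1 - t ^ (m + 1 - i)) * Bq t (m + 1) i = (1 - t ^ (m + 1)) * Bq t m i := by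
  rcases le_or_gt i m with h | h
  · rw [Bq, if_pos (by omega), Bq, if_pos h]
    have h1 : m + 1 - i = (m - i) + 1 := by omega
    rw [h1, tpoch_t_succ t m, tpoch_t_succ t (m - i)]
    have h2 := htt i; have h3 := htt (m - i); have h4 := hpow htt (m - i); have h5 := hpow htt m
    set Pm := tpoch t t m
    set Pi := tpoch t t i
    set Pmi := tpoch t t (m - i)
    field_simp
  · rcases Nat.lt_or_ge i (m + 2) with h2 | h2
    · have : i = m + 1 := by omega
      subst this
      simp [Bq_of_gt h]
    · rw [Bq_of_gt (by omega : m + 1 < i), Bq_of_gt h, mul_zero, mul_zero]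

lemma pascalA (n i : ℕ) :
    Bq t (n + 2) (i + 1) = Bq t (n + 1) (i + 1) + t ^ (n + 1 - i) * Bq t (n + 1) i := by
  rcases le_or_gt i n with h | h
  · obtain ⟨j, rfl⟩ : ∃ j, n = i + j := ⟨n - i, by omega⟩
    rw [Bq, if_pos (by omega), Bq, if_pos (by omega), Bq, if_pos (by omega)]
    have e1 : i + j + 2 - (i + 1) = j + 1 := by omega
    have e2 : i + j + 1 - (i + 1) = j := by omega
    have e3 : i + j + 1 - i = j + 1 := by omega
    rw [e1, e2, e3]
    rw [tpoch_t_succ t (i + j + 1), tpoch_t_succ t (i + j), tpoch_t_succ t j,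
      tpoch_t_succ t i]
    have hj := hpow htt j
    have hi := hpow htt i
    have hij := hpow htt (i + j)
    have hij1 := hpow htt (i + j + 1)
    have p1 := htt i; have p2 := htt j; have p3 := htt (i + j)
    set Pi := tpoch t t i
    set Pj := tpoch t t j
    set Pij := tpoch t t (i + j)
    field_simp
    ring
  · rcases Nat.lt_or_ge i (n + 2) with h2 | h2
    · have : i = n + 1 := by omega
      subst this
      rw [Bq_self htt, Bq_self htt, Bq_of_gt (by omega)]
      simp
    · rw [Bq_of_gt (by omega : n + 2 < i + 1), Bq_of_gt (by omega : n + 1 < i + 1),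
        Bq_of_gt (by omega : n + 1 < i)]
      simp

lemma pascalB (n k : ℕ) :
    Bq t (n + 2) (k + 1) = Bq t (n + 1) k + t ^ (k + 1) * Bq t (n + 1) (k + 1) := by
  rcases le_or_gt k n with h | h
  · obtain ⟨j, rfl⟩ : ∃ j, n = k + j := ⟨n - k, by omega⟩
    rw [Bq, if_pos (by omega), Bq, if_pos (by omega), Bq, if_pos (by omega)]
    have e1 : k + j + 2 - (k + 1) = j + 1 := by omega
    have e2 : k + j + 1 - k = j + 1 := by omega
    have e3 : k + j + 1 - (k + 1) = j := by omega
    rw [e1, e2, e3]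
    rw [tpoch_t_succ t (k + j + 1), tpoch_t_succ t (k + j), tpoch_t_succ t j,
      tpoch_t_succ t k]
    have hj := hpow htt j
    have hk := hpow htt k
    have hkj := hpow htt (k + j)
    have hkj1 := hpow htt (k + j + 1)
    have p1 := htt k; have p2 := htt j; have p3 := htt (k + j)
    set Pk := tpoch t t k
    set Pj := tpoch t t j
    set Pkj := tpoch t t (k + j)
    field_simp
    ring
  · rcases Nat.lt_or_ge k (n + 2) with h2 | h2
    · have : k = n + 1 := by omega
      subst this
      rw [Bq_self htt, Bq_self htt, Bq_of_gt (by omega)]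
      simp
    · rw [Bq_of_gt (by omega : n + 2 < k + 1), Bq_of_gt (by omega : n + 1 < k),
        Bq_of_gt (by omega : n + 1 < k + 1)]
      simp

end

def Vrs (t c d : F) (p : ℕ) : F :=
  ∑ k ∈ Finset.range (p + 1), Bq t p k * (-c) ^ (p - k) * (-d) ^ k

def convS (t y : F) (u : ℕ → F) (n : ℕ) : F :=
  ∑ i ∈ Finset.range (n + 1), Bq t n i * t ^ (Nat.choose i 2) * y ^ i * u (n - i)

section
variable {t c d : F} (htt : ∀ m : ℕ, tpoch t t m ≠ 0)
include htt

lemma Vrs_zero : Vrs t c d 0 = 1 := by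
  simp [Vrs, Bq_zero_right htt]

lemma Vrs_one : Vrs t c d 1 = -(c + d) := by
  simp [Vrs, Finset.sum_range_succ, Bq_zero_right htt, Bq_self htt]
  ring

lemma Vaux (m : ℕ) :
    ∑ k ∈ Finset.range (m + 2), t ^ k * (Bq t (m + 1) k * (-c) ^ (m + 1 - k) * (-d) ^ k)
      = Vrs t c d (m + 1) + (1 - t ^ (m + 1)) * d * Vrs t c d m := by
  have step1 : ∀ k ∈ Finset.range (m + 2),
      t ^ k * (Bq t (m + 1) k * (-c) ^ (m + 1 - k) * (-d) ^ k)
        = Bq t (m + 1) k * (-c) ^ (m + 1 - k) * (-d) ^ k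
          - (1 - t ^ k) * (Bq t (m + 1) k * (-c) ^ (m + 1 - k) * (-d) ^ k) := by
    intro k _; ring
  have step2 : ∑ k ∈ Finset.range (m + 2),
      (1 - t ^ k) * (Bq t (m + 1) k * (-c) ^ (m + 1 - k) * (-d) ^ k)
        = (1 - t ^ (m + 1)) * (-d) * Vrs t c d m := by
    rw [Finset.sum_range_succ']
    simp only [pow_zero, sub_self, zero_mul, add_zero]
    have step3 : ∀ k ∈ Finset.range (m + 1),
        (1 - t ^ (k + 1)) * (Bq t (m + 1) (k + 1) * (-c) ^ (m + 1 - (k + 1)) * (-d) ^ (k + 1))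
          = ((1 - t ^ (m + 1)) * (-d)) * (Bq t m k * (-c) ^ (m - k) * (-d) ^ k) := by
      intro k _
      have e1 : m + 1 - (k + 1) = m - k := by omega
      rw [e1]
      linear_combination ((-c) ^ (m - k) * (-d) ^ (k + 1)) * abs2 htt m k
    rw [Finset.sum_congr rfl step3, ← Finset.mul_sum]
    rfl
  rw [Finset.sum_congr rfl step1, Finset.sum_sub_distrib, step2]
  have e : (∑ k ∈ Finset.range (m + 2), Bq t (m + 1) k * (-c) ^ (m + 1 - k) * (-d) ^ k)
      = Vrs t c d (m + 1) := rfl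
  rw [e]
  ring

lemma Vrs_rec (n : ℕ) :
    Vrs t c d (n + 2)
      = -(c + d) * Vrs t c d (n + 1) - (1 - t ^ (n + 1)) * (c * d) * Vrs t c d n := by
  have hA := Vaux (c := c) (d := d) htt n
  rw [Finset.sum_range_succ'] at hA
  simp only [pow_zero, one_mul, Bq_zero_right htt, Nat.sub_zero] at hA
  rw [Vrs, Finset.sum_range_succ']
  simp only [Bq_zero_right htt, pow_zero, mul_one, one_mul, Nat.sub_zero]
  have step1 : ∀ k ∈ Finset.range (n + 2),
      Bq t (n + 2) (k + 1) * (-c) ^ (n + 2 - (k + 1)) * (-d) ^ (k + 1)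
        = (-d) * (Bq t (n + 1) k * (-c) ^ (n + 1 - k) * (-d) ^ k)
          + (-c) * (t ^ (k + 1) * (Bq t (n + 1) (k + 1) * (-c) ^ (n + 1 - (k + 1)) * (-d) ^ (k + 1))) := by
    intro k hk
    have hk' : k ≤ n + 1 := by simpa [Nat.lt_succ_iff] using hk
    have e1 : n + 2 - (k + 1) = n + 1 - k := by omega
    rw [e1, pascalB htt n k]
    rcases Nat.lt_or_ge k (n + 1) with h | h
    · have e2 : n + 1 - k = (n + 1 - (k + 1)) + 1 := by omega
      rw [e2, pow_succ]
      ring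
    · have hk2 : k = n + 1 := by omega
      subst hk2
      rw [Bq_of_gt (by omega : n + 1 < n + 1 + 1)]
      simp [pow_succ]
      ring
  rw [Finset.sum_congr rfl step1, Finset.sum_add_distrib, ← Finset.mul_sum, ← Finset.mul_sum]
  have step2 : ∑ k ∈ Finset.range (n + 2),
      t ^ (k + 1) * (Bq t (n + 1) (k + 1) * (-c) ^ (n + 1 - (k + 1)) * (-d) ^ (k + 1))
        = ∑ k ∈ Finset.range (n + 1),
      t ^ (k + 1) * (Bq t (n + 1) (k + 1) * (-c) ^ (n + 1 - (k + 1)) * (-d) ^ (k + 1)) := by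
    rw [Finset.sum_range_succ, Bq_of_gt (by omega : n + 1 < n + 1 + 1)]
    simp
  rw [step2]
  have hsum : ∑ k ∈ Finset.range (n + 1),
      t ^ (k + 1) * (Bq t (n + 1) (k + 1) * (-c) ^ (n + 1 - (k + 1)) * (-d) ^ (k + 1))
        = Vrs t c d (n + 1) + (1 - t ^ (n + 1)) * d * Vrs t c d n - (-c) ^ (n + 1) := by
    linear_combination hA
  rw [hsum]
  have e : (∑ i ∈ Finset.range (n + 2), Bq t (n + 1) i * (-c) ^ (n + 1 - i) * (-d) ^ i)
      = Vrs t c d (n + 1) := rfl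
  rw [e]
  ring


lemma conv_zero (y : F) (u : ℕ → F) : convS t y u 0 = u 0 := by
  simp [convS, Bq_zero_right htt]

lemma conv_one (y : F) (u : ℕ → F) : convS t y u 1 = u 1 + y * u 0 := by
  simp [convS, Finset.sum_range_succ, Bq_zero_right htt, Bq_self htt]

lemma convAux (y : F) (u : ℕ → F) (m : ℕ) :
    ∑ i ∈ Finset.range (m + 2),
        Bq t (m + 1) i * t ^ (Nat.choose i 2) * y ^ i * (t ^ (m + 1 - i) * u (m + 1 - i))
      = t ^ (m + 1) * convS t y u (m + 1) + y * t ^ m * (1 - t ^ (m + 1)) * convS t y u m := by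
  have step1 : ∀ i ∈ Finset.range (m + 2),
      Bq t (m + 1) i * t ^ (Nat.choose i 2) * y ^ i * (t ^ (m + 1 - i) * u (m + 1 - i))
        = t ^ (m + 1) * (Bq t (m + 1) i * t ^ (Nat.choose i 2) * y ^ i * u (m + 1 - i))
          + t ^ (m + 1 - i) * (1 - t ^ i)
              * (Bq t (m + 1) i * t ^ (Nat.choose i 2) * y ^ i * u (m + 1 - i)) := by
    intro i hi
    have hi' : i ≤ m + 1 := by simpa [Nat.lt_succ_iff] using hi
    have hp : t ^ (m + 1 - i) * t ^ i = t ^ (m + 1) := by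
      rw [← pow_add]; congr 1; omega
    linear_combination (Bq t (m + 1) i * t ^ (Nat.choose i 2) * y ^ i * u (m + 1 - i)) * hp
  rw [Finset.sum_congr rfl step1, Finset.sum_add_distrib, ← Finset.mul_sum]
  have e1 : (∑ i ∈ Finset.range (m + 2),
      Bq t (m + 1) i * t ^ (Nat.choose i 2) * y ^ i * u (m + 1 - i)) = convS t y u (m + 1) := rfl
  rw [e1]
  have step2 : ∑ i ∈ Finset.range (m + 2),
      t ^ (m + 1 - i) * (1 - t ^ i) * (Bq t (m + 1) i * t ^ (Nat.choose i 2) * y ^ i * u (m + 1 - i))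
        = (y * t ^ m * (1 - t ^ (m + 1))) * convS t y u m := by
    rw [Finset.sum_range_succ']
    simp only [pow_zero, sub_self, mul_zero, zero_mul, add_zero]
    have step3 : ∀ i ∈ Finset.range (m + 1),
        t ^ (m + 1 - (i + 1)) * (1 - t ^ (i + 1))
            * (Bq t (m + 1) (i + 1) * t ^ (Nat.choose (i + 1) 2) * y ^ (i + 1) * u (m + 1 - (i + 1)))
          = (y * t ^ m * (1 - t ^ (m + 1)))
              * (Bq t m i * t ^ (Nat.choose i 2) * y ^ i * u (m - i)) := by
      intro i hi
      have hi' : i ≤ m := by simpa [Nat.lt_succ_iff] using hi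
      have e2 : m + 1 - (i + 1) = m - i := by omega
      have e3 : Nat.choose (i + 1) 2 = Nat.choose i 2 + i := by
        rw [Nat.choose_succ_succ, Nat.choose_one_right]
        exact Nat.add_comm _ _
      have e4 : t ^ (m - i) * t ^ i = t ^ m := by rw [← pow_add]; congr 1; omega
      rw [e2, e3, pow_add]
      linear_combination (t ^ (m - i) * (t ^ (Nat.choose i 2) * t ^ i) * y ^ (i + 1) * u (m - i))
            * abs2 htt m i
        + ((1 - t ^ (m + 1)) * Bq t m i * t ^ (Nat.choose i 2) * y ^ (i + 1) * u (m - i)) * e4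
    rw [Finset.sum_congr rfl step3, ← Finset.mul_sum]
    rfl
  rw [step2]

lemma convRec {x p w : F} (y : F) (u : ℕ → F) (hu1 : u 1 = (x + p) * u 0)
    (hu : ∀ m, u (m + 2) = (x * t ^ (m + 1) + p) * u (m + 1) + (1 - t ^ (m + 1)) * w * u m)
    (n : ℕ) :
    convS t y u (n + 2)
      = ((x + y) * t ^ (n + 1) + p) * convS t y u (n + 1)
        + (1 - t ^ (n + 1)) * (w + x * y * t ^ n) * convS t y u n := by
  have h0 : convS t y u (n + 2)
      = (∑ i ∈ Finset.range (n + 2),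
          Bq t (n + 2) (i + 1) * t ^ (Nat.choose (i + 1) 2) * y ^ (i + 1) * u (n + 2 - (i + 1)))
        + u (n + 2) := by
    rw [convS, Finset.sum_range_succ']
    simp [Bq_zero_right htt]
  have step1 : ∀ i ∈ Finset.range (n + 2),
      Bq t (n + 2) (i + 1) * t ^ (Nat.choose (i + 1) 2) * y ^ (i + 1) * u (n + 2 - (i + 1))
        = Bq t (n + 1) (i + 1) * t ^ (Nat.choose (i + 1) 2) * y ^ (i + 1) * u (n + 1 - i)
          + (y * t ^ (n + 1)) * (Bq t (n + 1) i * t ^ (Nat.choose i 2) * y ^ i * u (n + 1 - i)) := by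
    intro i hi
    have hi' : i ≤ n + 1 := by simpa [Nat.lt_succ_iff] using hi
    have e2 : n + 2 - (i + 1) = n + 1 - i := by omega
    have e3 : Nat.choose (i + 1) 2 = Nat.choose i 2 + i := by
      rw [Nat.choose_succ_succ, Nat.choose_one_right]
      exact Nat.add_comm _ _
    have e4 : t ^ (n + 1 - i) * t ^ i = t ^ (n + 1) := by rw [← pow_add]; congr 1; omega
    rw [e2, e3, pow_add, pascalA htt n i]
    linear_combination (Bq t (n + 1) i * t ^ (Nat.choose i 2) * y ^ (i + 1) * u (n + 1 - i)) * e4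
  have h1 : (∑ i ∈ Finset.range (n + 2),
      Bq t (n + 2) (i + 1) * t ^ (Nat.choose (i + 1) 2) * y ^ (i + 1) * u (n + 2 - (i + 1)))
      = (∑ i ∈ Finset.range (n + 2),
          Bq t (n + 1) (i + 1) * t ^ (Nat.choose (i + 1) 2) * y ^ (i + 1) * u (n + 1 - i))
        + (y * t ^ (n + 1)) * convS t y u (n + 1) := by
    rw [Finset.sum_congr rfl step1, Finset.sum_add_distrib, ← Finset.mul_sum]
    rfl
  have h2 : (∑ i ∈ Finset.range (n + 2),
        Bq t (n + 1) (i + 1) * t ^ (Nat.choose (i + 1) 2) * y ^ (i + 1) * u (n + 1 - i))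
        + u (n + 2)
      = ∑ i ∈ Finset.range (n + 2),
          Bq t (n + 1) i * t ^ (Nat.choose i 2) * y ^ i * u (n + 2 - i) := by
    rw [Finset.sum_range_succ, Bq_of_gt (by omega : n + 1 < n + 1 + 1)]
    rw [show (∑ i ∈ Finset.range (n + 2), Bq t (n + 1) i * t ^ (Nat.choose i 2) * y ^ i * u (n + 2 - i))
        = (∑ i ∈ Finset.range (n + 1),
            Bq t (n + 1) (i + 1) * t ^ (Nat.choose (i + 1) 2) * y ^ (i + 1) * u (n + 2 - (i + 1)))
          + Bq t (n + 1) 0 * t ^ (Nat.choose 0 2) * y ^ 0 * u (n + 2 - 0)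
        from Finset.sum_range_succ' _ _]
    rw [show (∑ i ∈ Finset.range (n + 1),
            Bq t (n + 1) (i + 1) * t ^ (Nat.choose (i + 1) 2) * y ^ (i + 1) * u (n + 2 - (i + 1)))
        = (∑ i ∈ Finset.range (n + 1),
            Bq t (n + 1) (i + 1) * t ^ (Nat.choose (i + 1) 2) * y ^ (i + 1) * u (n + 1 - i))
        from Finset.sum_congr rfl (fun i hi => by
          rw [show n + 2 - (i + 1) = n + 1 - i from by omega])]
    simp [Bq_zero_right htt]
  have step3 : ∀ i ∈ Finset.range (n + 2),
      Bq t (n + 1) i * t ^ (Nat.choose i 2) * y ^ i * u (n + 2 - i)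
        = x * (Bq t (n + 1) i * t ^ (Nat.choose i 2) * y ^ i * (t ^ (n + 1 - i) * u (n + 1 - i)))
          + p * (Bq t (n + 1) i * t ^ (Nat.choose i 2) * y ^ i * u (n + 1 - i))
          + ((1 - t ^ (n + 1)) * w) * (Bq t n i * t ^ (Nat.choose i 2) * y ^ i * u (n - i)) := by
    intro i hi
    have habs := abs1 htt n i
    rcases Nat.lt_or_ge i (n + 1) with h | h
    · have e1 : n + 2 - i = (n - i) + 2 := by omega
      have e2 : (n - i) + 1 = n + 1 - i := by omega
      rw [e1, hu (n - i), e2]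
      linear_combination (w * u (n - i) * t ^ (Nat.choose i 2) * y ^ i) * habs
    · have hi' : i ≤ n + 1 := by simpa [Nat.lt_succ_iff] using hi
      have hi2 : i = n + 1 := by omega
      subst hi2
      rw [show n + 2 - (n + 1) = 1 from by omega, show n + 1 - (n + 1) = 0 from by omega,
        show n - (n + 1) = 0 from by omega, hu1, Bq_of_gt (by omega : n < n + 1)]
      simp
      ring
  have h3 : ∑ i ∈ Finset.range (n + 2),
      Bq t (n + 1) i * t ^ (Nat.choose i 2) * y ^ i * u (n + 2 - i)
      = x * (t ^ (n + 1) * convS t y u (n + 1) + y * t ^ n * (1 - t ^ (n + 1)) * convS t y u n)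
        + p * convS t y u (n + 1) + ((1 - t ^ (n + 1)) * w) * convS t y u n := by
    rw [Finset.sum_congr rfl step3, Finset.sum_add_distrib, Finset.sum_add_distrib,
      ← Finset.mul_sum, ← Finset.mul_sum, ← Finset.mul_sum]
    rw [convAux htt y u n]
    have e5 : (∑ i ∈ Finset.range (n + 2),
        Bq t (n + 1) i * t ^ (Nat.choose i 2) * y ^ i * u (n + 1 - i)) = convS t y u (n + 1) := rfl
    have e6 : (∑ i ∈ Finset.range (n + 2),
        Bq t n i * t ^ (Nat.choose i 2) * y ^ i * u (n - i)) = convS t y u n := by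
      rw [Finset.sum_range_succ, Bq_of_gt (by omega : n < n + 1)]
      simp [convS]
    rw [e5, e6]
  have final := h0
  rw [h1] at final
  have final2 : convS t y u (n + 2)
      = ((∑ i ∈ Finset.range (n + 2),
          Bq t (n + 1) (i + 1) * t ^ (Nat.choose (i + 1) 2) * y ^ (i + 1) * u (n + 1 - i))
        + u (n + 2)) + (y * t ^ (n + 1)) * convS t y u (n + 1) := by
    rw [final]; ring
  rw [h2, h3] at final2
  rw [final2]
  ring


lemma triple_eq (a b c d : F) (n : ℕ) :
    (∑ i ∈ Finset.range (n + 1), ∑ j ∈ Finset.range (n + 1), ∑ k ∈ Finset.range (n + 1),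
      if i + j + k ≤ n then
        (tpoch t t n / (tpoch t t i * tpoch t t j * tpoch t t k * tpoch t t (n - i - j - k)))
          * t ^ (Nat.choose i 2 + Nat.choose j 2)
          * a ^ i * b ^ j * (-c) ^ (n - k) * (-d) ^ (i + j + k)
      else 0)
    = convS t (a * c * d) (fun m => convS t (b * c * d) (Vrs t c d) m) n := by
  rw [convS]
  apply Finset.sum_congr rfl
  intro i hi
  have hi' : i ≤ n := by simpa [Nat.lt_succ_iff] using hi
  have shrinkj : ∑ j ∈ Finset.range (n + 1), (∑ k ∈ Finset.range (n + 1),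
      if i + j + k ≤ n then
        (tpoch t t n / (tpoch t t i * tpoch t t j * tpoch t t k * tpoch t t (n - i - j - k)))
          * t ^ (Nat.choose i 2 + Nat.choose j 2)
          * a ^ i * b ^ j * (-c) ^ (n - k) * (-d) ^ (i + j + k)
      else 0)
      = ∑ j ∈ Finset.range (n - i + 1), (∑ k ∈ Finset.range (n + 1),
      if i + j + k ≤ n then
        (tpoch t t n / (tpoch t t i * tpoch t t j * tpoch t t k * tpoch t t (n - i - j - k)))
          * t ^ (Nat.choose i 2 + Nat.choose j 2)
          * a ^ i * b ^ j * (-c) ^ (n - k) * (-d) ^ (i + j + k)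
      else 0) := by
    refine (Finset.sum_subset (Finset.range_subset_range.2 (by omega)) ?_).symm
    intro j hj hj'
    refine Finset.sum_eq_zero fun k _ => if_neg ?_
    simp only [Finset.mem_range] at hj hj'
    omega
  rw [shrinkj]
  show _ = Bq t n i * t ^ (Nat.choose i 2) * (a * c * d) ^ i * convS t (b * c * d) (Vrs t c d) (n - i)
  rw [convS, Finset.mul_sum]
  apply Finset.sum_congr rfl
  intro j hj
  have hj' : j ≤ n - i := by simpa [Nat.lt_succ_iff] using hj
  have shrinkk : ∑ k ∈ Finset.range (n + 1),
      (if i + j + k ≤ n then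
        (tpoch t t n / (tpoch t t i * tpoch t t j * tpoch t t k * tpoch t t (n - i - j - k)))
          * t ^ (Nat.choose i 2 + Nat.choose j 2)
          * a ^ i * b ^ j * (-c) ^ (n - k) * (-d) ^ (i + j + k)
      else 0)
      = ∑ k ∈ Finset.range (n - i - j + 1),
      (if i + j + k ≤ n then
        (tpoch t t n / (tpoch t t i * tpoch t t j * tpoch t t k * tpoch t t (n - i - j - k)))
          * t ^ (Nat.choose i 2 + Nat.choose j 2)
          * a ^ i * b ^ j * (-c) ^ (n - k) * (-d) ^ (i + j + k)
      else 0) := by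
    refine (Finset.sum_subset (Finset.range_subset_range.2 (by omega)) ?_).symm
    intro k hk hk'
    refine if_neg ?_
    simp only [Finset.mem_range] at hk hk'
    omega
  rw [shrinkk, Vrs, Finset.mul_sum, Finset.mul_sum]
  apply Finset.sum_congr rfl
  intro k hk
  have hk' : k ≤ n - i - j := by simpa [Nat.lt_succ_iff] using hk
  rw [if_pos (by omega : i + j + k ≤ n)]
  obtain ⟨r, rfl⟩ : ∃ r, n = i + j + k + r := ⟨n - i - j - k, by omega⟩
  rw [Bq, if_pos (by omega : i ≤ i + j + k + r), Bq, if_pos (by omega : j ≤ i + j + k + r - i),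
    Bq, if_pos (by omega : k ≤ i + j + k + r - i - j)]
  rw [show i + j + k + r - i - j - k = r from by omega,
    show i + j + k + r - i - j = k + r from by omega,
    show i + j + k + r - i = j + (k + r) from by omega,
    show i + j + k + r - k = i + j + r from by omega]
  have hsign : ((-1 : F)) ^ (i + j + r) * (-1) ^ (i + j + k) = (-1) ^ r * (-1) ^ k := by
    rw [← pow_add, ← pow_add, show i + j + r + (i + j + k) = 2 * (i + j) + (r + k) from by omega,
      pow_add, pow_mul, neg_one_sq, one_pow, one_mul]
  have h2 := htt i; have h3 := htt j; have h4 := htt k; have h5 := htt r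
  have h6 := htt (j + (k + r)); have h7 := htt (k + r)
  rw [show t ^ (Nat.choose i 2 + Nat.choose j 2)
      = t ^ (Nat.choose i 2) * t ^ (Nat.choose j 2) from pow_add t _ _]
  simp only [neg_pow c, neg_pow d, mul_pow]
  field_simp
  linear_combination (tpoch t t (i + j + k + r) * t ^ (Nat.choose i 2) * t ^ (Nat.choose j 2)
    * a ^ i * b ^ j * c ^ i * c ^ j * c ^ r * d ^ i * d ^ j * d ^ k) * hsign

end
end Stmt2

lemma final_alg {F : Type*} [Field F] (q x1 x2 tp s a b c d S1 S0 : F)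
    (hq : q ≠ 0) (hc : c ≠ 0) (hd : d ≠ 0)
    (h1 : x1 ≠ 0) (h2 : x2 ≠ 0) (e1 : x1 = 1 - a*b*c*d*s) (e2 : x2 = 1 - a*b*c*d*tp) :
    (tp*a*b - c⁻¹*d⁻¹) * ((q*x1*x2)⁻¹ * (((b*c*d + a*c*d)*tp + -(c+d)) * S1
        + (1 - tp) * (-(c*d) + b*c*d*(a*c*d)*s) * S0))
    + (tp*(a+b) - (c⁻¹+d⁻¹)) * ((q*x1)⁻¹ * S1) + (tp - 1) * (q⁻¹ * S0) = 0 := by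
  have hprod : (c * d * (q * x1 * x2)) ≠ 0 :=
    mul_ne_zero (mul_ne_zero hc hd) (mul_ne_zero (mul_ne_zero hq h1) h2)
  apply mul_left_cancel₀ hprod
  rw [mul_zero]
  field_simp
  subst e1 e2
  ring

open Stmt2 in
/-- the explicit expression `hExp` satisfies the three-term recursion
`(t^(n-1)ab - c⁻¹d⁻¹) h n + (t^(n-1)(a+b) - (c⁻¹+d⁻¹)) h (n-1) + (t^(n-1)-1) h (n-2) = 0`
with initial condition `h 0 = 1`. -/
theorem statement2 {F : Type*} [Field F] (t a b c d : F)
    (ht : t ≠ 0) (ha : a ≠ 0) (hb : b ≠ 0) (hc : c ≠ 0) (hd : d ≠ 0)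
    (htt : ∀ m : ℕ, tpoch t t m ≠ 0)
    (habcd : ∀ n : ℕ, tpoch t (a * b * c * d) n ≠ 0) :
    hExp t a b c d 0 = 1 ∧
      ∀ n : ℕ, 2 ≤ n →
        (t ^ (n - 1) * a * b - c⁻¹ * d⁻¹) * hExp t a b c d n
          + (t ^ (n - 1) * (a + b) - (c⁻¹ + d⁻¹)) * hExp t a b c d (n - 1)
          + (t ^ (n - 1) - 1) * hExp t a b c d (n - 2) = 0 := by
  classical
  constructor
  · simp [hExp, tpoch]
  · intro n hn
    obtain ⟨m, rfl⟩ : ∃ m, n = m + 2 := ⟨n - 2, by omega⟩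
    set T : ℕ → F := fun m => convS t (b * c * d) (Vrs t c d) m with hT
    set S : ℕ → F := fun m => convS t (a * c * d) T m with hSdef
    have hV1 : Vrs t c d 1 = ((0 : F) + -(c + d)) * Vrs t c d 0 := by
      rw [Vrs_one htt, Vrs_zero htt]; ring
    have hVrec : ∀ m, Vrs t c d (m + 2)
        = ((0 : F) * t ^ (m + 1) + -(c + d)) * Vrs t c d (m + 1)
          + (1 - t ^ (m + 1)) * (-(c * d)) * Vrs t c d m := by
      intro m; rw [Vrs_rec htt]; ring
    have hT1 : T 1 = (b * c * d + -(c + d)) * T 0 := by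
      show convS t (b * c * d) (Vrs t c d) 1
          = (b * c * d + -(c + d)) * convS t (b * c * d) (Vrs t c d) 0
      rw [conv_one htt, conv_zero htt, Vrs_one htt, Vrs_zero htt]; ring
    have hTrec : ∀ m, T (m + 2)
        = (b * c * d * t ^ (m + 1) + -(c + d)) * T (m + 1)
          + (1 - t ^ (m + 1)) * (-(c * d)) * T m := by
      intro m
      show convS t (b * c * d) (Vrs t c d) (m + 2)
          = (b * c * d * t ^ (m + 1) + -(c + d)) * convS t (b * c * d) (Vrs t c d) (m + 1)
            + (1 - t ^ (m + 1)) * (-(c * d)) * convS t (b * c * d) (Vrs t c d) m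
      rw [convRec htt (b * c * d) (Vrs t c d) hV1 hVrec m]
      ring
    have hSrec : S (m + 2)
        = ((b * c * d + a * c * d) * t ^ (m + 1) + -(c + d)) * S (m + 1)
          + (1 - t ^ (m + 1)) * (-(c * d) + b * c * d * (a * c * d) * t ^ m) * S m :=
      convRec htt (a * c * d) T hT1 hTrec m
    have hExp_eq : ∀ k, hExp t a b c d k = (tpoch t (a * b * c * d) k)⁻¹ * S k := by
      intro k
      rw [hExp, triple_eq htt a b c d k]
    rw [show m + 2 - 1 = m + 1 from rfl, show m + 2 - 2 = m from rfl,
      hExp_eq (m + 2), hExp_eq (m + 1), hExp_eq m, hSrec]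
    have hQ2 : tpoch t (a * b * c * d) (m + 2)
        = tpoch t (a * b * c * d) m * (1 - a * b * c * d * t ^ m)
          * (1 - a * b * c * d * t ^ (m + 1)) := by
      rw [tpoch_succ, tpoch_succ]
    have hQ1 : tpoch t (a * b * c * d) (m + 1)
        = tpoch t (a * b * c * d) m * (1 - a * b * c * d * t ^ m) := by
      rw [tpoch_succ]
    have hq0 := habcd m
    have hq1 : (1 - a * b * c * d * t ^ m) ≠ 0 := by
      intro h
      have := habcd (m + 1)
      rw [tpoch_succ, h, mul_zero] at this
      exact this rfl
    have hq2 : (1 - a * b * c * d * t ^ (m + 1)) ≠ 0 := by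
      intro h
      have := habcd (m + 2)
      rw [tpoch_succ, h, mul_zero] at this
      exact this rfl
    rw [hQ2, hQ1]
    exact final_alg _ _ _ _ _ a b c d _ _ hq0 hc hd hq1 hq2 rfl rfl
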